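/- Let X be a compact Hausdorff space and let F : ℝ × X → X be a continuous flow. Define the period function p : X → [0,∞] by p(x) = inf{ t > 0 : F(t,x) = x }, with the convention inf ∅ = ∞. Then p is lower semicontinuous. -/

import Mathlib

open scoped ENNReal

/-- The period function of a continuous flow on a compact Hausdorff space is lower
semicontinuous. -/
theorem stmt6 {X : Type*} [TopologicalSpace X] [CompactSpace X] [T2Space X]
    (F : ℝ × X → X) (hF : Continuous F)
    (h0 : ∀ x, F (0, x) = x)
    (hadd : ∀ s t x, F (s + t, x) = F (s, F (t, x)))
    (p : X → ℝ≥0∞)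
    (hp : ∀ x, p x = sInf (ENNReal.ofReal '' {t : ℝ | 0 < t ∧ F (t, x) = x})) :
    LowerSemicontinuous p := by
  -- multiples of periods are periods
  have hmul : ∀ (y : X) (t : ℝ), F (t, y) = y → ∀ n : ℕ, F (n * t, y) = y := by
    intro y t ht n
    induction n with
    | zero => simpa using h0 y
    | succ n ih =>
      have : ((n : ℝ) + 1) * t = (n : ℝ) * t + t := by ring
      push_cast
      rw [this, hadd, ht, ih]
  intro x c hc
  obtain ⟨d, hcd, hdp⟩ := exists_between hc
  have hd0 : 0 < d := lt_of_le_of_lt (zero_le : 0 ≤ c) hcd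
  have hdtop : d ≠ ⊤ := hdp.ne_top
  set r := d.toReal with hrdef
  have hr0 : 0 < r := ENNReal.toReal_pos hd0.ne' hdtop
  have hofr : ENNReal.ofReal r = d := ENNReal.ofReal_toReal hdtop
  -- x has no period in (0, r]
  have hnoper : ∀ t : ℝ, 0 < t → t ≤ r → F (t, x) ≠ x := by
    intro t ht htr hFt
    have h1 : p x ≤ ENNReal.ofReal t := by
      rw [hp]; exact sInf_le ⟨t, ⟨ht, hFt⟩, rfl⟩
    have h2 : p x ≤ d :=
      h1.trans (by rw [← hofr]; exact ENNReal.ofReal_le_ofReal htr)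
    exact absurd hdp (not_lt.mpr h2)
  have hSclosed : IsClosed {q : ℝ × X | F q = q.2} := isClosed_eq hF continuous_snd
  have hsub : Set.Icc (r / 2) r ×ˢ ({x} : Set X) ⊆ {q : ℝ × X | F q = q.2}ᶜ := by
    rintro ⟨t, y⟩ ⟨⟨ht1, ht2⟩, hy⟩
    simp only [Set.mem_singleton_iff] at hy
    subst hy
    exact fun hFt => hnoper t (lt_of_lt_of_le (by linarith) ht1) ht2 hFt
  obtain ⟨u, v, hu, hv, hIu, hxv, huv⟩ :=
    generalized_tube_lemma isCompact_Icc isCompact_singleton hSclosed.isOpen_compl hsub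
  have hxv' : x ∈ v := hxv rfl
  filter_upwards [hv.mem_nhds hxv'] with y hy
  refine lt_of_lt_of_le hcd ?_
  rw [hp y]
  refine le_sInf ?_
  rintro s ⟨t, ⟨ht0, hFty⟩, rfl⟩
  rcases le_or_gt t r with htr | htr
  · -- find a multiple of t in [r/2, r], contradiction
    exfalso
    obtain ⟨n, hn1, hn2⟩ : ∃ n : ℕ, r / 2 ≤ n * t ∧ (n : ℝ) * t ≤ r := by
      rcases le_or_gt (r / 2) t with h | h
      · exact ⟨1, by simpa using h, by simpa using htr⟩
      · refine ⟨⌈r / (2 * t)⌉₊, ?_, ?_⟩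
        · have := Nat.le_ceil (r / (2 * t))
          calc r / 2 = r / (2 * t) * t := by field_simp
          _ ≤ (⌈r / (2 * t)⌉₊ : ℝ) * t := by
              exact mul_le_mul_of_nonneg_right this ht0.le
        · have hlt : (⌈r / (2 * t)⌉₊ : ℝ) < r / (2 * t) + 1 :=
            Nat.ceil_lt_add_one (by positivity)
          have : (⌈r / (2 * t)⌉₊ : ℝ) * t < (r / (2 * t) + 1) * t :=
            mul_lt_mul_of_pos_right hlt ht0
          have heq : (r / (2 * t) + 1) * t = r / 2 + t := by field_simp
          nlinarith
    have hmem : ((n : ℝ) * t, y) ∈ u ×ˢ v := ⟨hIu ⟨hn1, hn2⟩, hy⟩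
    exact huv hmem (hmul y t hFty n)
  · rw [← hofr]
    exact ENNReal.ofReal_le_ofReal htr.le
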